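/- Let i ≥ 2 be an integer and let h₁, …, h_i be integers with |h_j| ≤ j for every j. Assume that if h_j ≠ h_i for all j < i, then either h_j < h_i for all j < i or h_j > h_i for all j < i. For 1 ≤ j < i define the attention score s_j = φ(h_i, 1) · φ(h_j, 1) − z(f(j)), where z(x) = x/√(2x² + 2) and f is the tie-breaking function. Let M = {j : 1 ≤ j < i, s_j = max_{1 ≤ j' < i} s_{j'}} and let φ̄ = (1/|M|) Σ_{j ∈ M} φ(h_j, 1) be the saturated-attention output. Then there exists j < i with h_j = h_i if and only if φ̄ = φ(h_i, 1). -/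

import Mathlib

open scoped RealInnerProductSpace

/-- Layer norm: subtract the mean, then normalize to unit Euclidean norm. -/
noncomputable def layerNorm {ι : Type*} [Fintype ι] (v : EuclideanSpace ℝ ι) :
    EuclideanSpace ℝ ι :=
  let c : EuclideanSpace ℝ ι := WithLp.toLp 2 (fun j => v j - (∑ l, v l) / (Fintype.card ι))
  ‖c‖⁻¹ • c

/-- The layer-norm hash φ(x, y) = layer_norm(⟨x, y, −x, −y⟩) ∈ ℝ⁴. -/
noncomputable def lnHash (x y : ℝ) : EuclideanSpace ℝ (Fin 4) :=
  layerNorm (WithLp.toLp 2 ![x, y, -x, -y] : EuclideanSpace ℝ (Fin 4))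

/-- Two-argument tie-breaking recursion: f(i, 0) = 1/i, f(i, k+1) = f(i−1, k) − f(i, k). -/
noncomputable def fTie : ℕ → ℝ → ℝ
  | 0, i => 1 / i
  | (k + 1), i => fTie k (i - 1) - fTie k i

/-- The tie-breaking function f on integers i ≥ 1, with ε = 10⁻¹⁰. -/
noncomputable def tieBreak (i : ℤ) : ℝ :=
  if i ≤ 4 then 1 / 1000 - (10 : ℝ)⁻¹ ^ 10 * (i : ℝ) else fTie 3 (i : ℝ) / 100

/-- z(x) = x/√(2x² + 2), the first coordinate of φ(x, 1). -/
noncomputable def zfn (x : ℝ) : ℝ := x / Real.sqrt (2 * x ^ 2 + 2)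

noncomputable def nrm (x : ℝ) : ℝ := Real.sqrt (2*x^2+2)
noncomputable def vecx (x : ℝ) : EuclideanSpace ℝ (Fin 4) := WithLp.toLp 2 ![x,1,-x,-1]

lemma nrm_pos (x : ℝ) : 0 < nrm x := Real.sqrt_pos.2 (by positivity)
lemma nrm_sq (x : ℝ) : nrm x ^ 2 = 2*x^2+2 := Real.sq_sqrt (by positivity)

lemma norm_vecx (x : ℝ) : ‖vecx x‖ = nrm x := by
  refine (EuclideanSpace.norm_eq (vecx x)).trans ?_
  unfold nrm vecx
  congr 1
  rw [Fin.sum_univ_four]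
  simp [Real.norm_eq_abs, sq_abs]
  ring

lemma lnHash_eq (x : ℝ) : lnHash x 1 = (nrm x)⁻¹ • vecx x := by
  have hx : lnHash x 1 = layerNorm (vecx x) := rfl
  rw [hx]
  unfold layerNorm
  have hsum : (∑ l, (vecx x) l) = 0 := by
    rw [Fin.sum_univ_four]; unfold vecx; simp
  have hc : (fun j => (vecx x) j - (∑ l, (vecx x) l) / (Fintype.card (Fin 4))) = vecx x := by
    funext j; rw [hsum]; simp
  simp only [hc, WithLp.toLp_ofLp, norm_vecx]

lemma norm_lnHash (x : ℝ) : ‖lnHash x 1‖ = 1 := by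
  rw [lnHash_eq, norm_smul, norm_vecx]
  rw [Real.norm_eq_abs, abs_of_pos (inv_pos.2 (nrm_pos x)), inv_mul_cancel₀ (nrm_pos x).ne']

lemma inner_lnHash (x y : ℝ) : ⟪lnHash x 1, lnHash y 1⟫ = (2*x*y+2)/(nrm x * nrm y) := by
  rw [lnHash_eq, lnHash_eq, real_inner_smul_left, real_inner_smul_right]
  have : ⟪vecx x, vecx y⟫ = 2*x*y+2 := by
    rw [PiLp.inner_apply, Fin.sum_univ_four]
    unfold vecx
    simp [RCLike.inner_apply]
    ring
  rw [this]
  field_simp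

lemma inner_lnHash_self (x : ℝ) : ⟪lnHash x 1, lnHash x 1⟫ = 1 := by
  rw [real_inner_self_eq_norm_sq, norm_lnHash]; norm_num

lemma lnHash_inj {x y : ℝ} (hxy : lnHash x 1 = lnHash y 1) : x = y := by
  have h1 : ⟪lnHash x 1, lnHash y 1⟫ = 1 := by rw [hxy, inner_lnHash_self]
  rw [inner_lnHash] at h1
  have hD : nrm x * nrm y > 0 := mul_pos (nrm_pos x) (nrm_pos y)
  rw [div_eq_one_iff_eq hD.ne'] at h1
  have h2 : (2*x*y+2)^2 = (nrm x)^2 * (nrm y)^2 := by rw [h1]; ring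
  rw [nrm_sq, nrm_sq] at h2
  nlinarith [sq_nonneg (x - y), sq_nonneg (x*y - 1)]

lemma inner_lnHash_lt_one {x y : ℝ} (hxy : x ≠ y) : ⟪lnHash x 1, lnHash y 1⟫ < 1 := by
  refine lt_of_le_of_ne ?_ ?_
  · have := real_inner_le_norm (lnHash x 1) (lnHash y 1)
    rwa [norm_lnHash, norm_lnHash, one_mul] at this
  · intro h1
    exact hxy (lnHash_inj ((inner_eq_one_iff_of_norm_eq_one (norm_lnHash x) (norm_lnHash y)).1 h1))

lemma int_gap {a b : ℤ} (hab : a ≠ b) :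
    ((b:ℝ)^2+1) ≤ ((a:ℝ)-(b:ℝ))^2 * ((|(a:ℝ)|+1)^2+1) := by
  have key : (b^2+1) ≤ (a-b)^2 * ((|a|+1)^2+1) := by
    rcases le_or_gt |b| (|a|+1) with hb | hb
    · have h1 : 1 ≤ (a-b)^2 := by
        have : a - b ≠ 0 := sub_ne_zero.2 hab
        have := Int.one_le_abs this
        nlinarith [sq_abs (a-b)]
      have h2 : b^2 ≤ (|a|+1)^2 := by
        nlinarith [sq_abs b, sq_abs a, abs_nonneg a, abs_nonneg b]
      nlinarith [sq_nonneg (a-b)]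
    · have ht : |a| + 2 ≤ |b| := by omega
      have habs : |b| - |a| ≤ |a - b| := by
        have := abs_sub_abs_le_abs_sub b a
        rw [abs_sub_comm] at this; linarith
      have h1 : (|b| - |a|)^2 ≤ (a-b)^2 := by
        have h0 : (0:ℤ) ≤ |b| - |a| := by linarith
        nlinarith [sq_abs (a-b), abs_nonneg (a-b)]
      set s := |a| with hs
      set t := |b| - |a| with htd
      have hs0 : 0 ≤ s := abs_nonneg a
      have ht2 : 2 ≤ t := by omega
      have hb2 : b^2 = (s+t)^2 := by
        have : |b| = s + t := by omega
        nlinarith [sq_abs b]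
      rw [hb2]
      have e1 : 0 ≤ s^2*(t^2-1) := mul_nonneg (sq_nonneg s) (by nlinarith)
      have e2 : 0 ≤ s*(t^2-t) := mul_nonneg hs0 (by nlinarith)
      have e3 : 3 ≤ t^2-1 := by nlinarith
      calc (s+t)^2 + 1 ≤ t^2 * ((s+1)^2+1) := by nlinarith
        _ ≤ (a-b)^2 * ((s+1)^2+1) := by nlinarith [sq_nonneg (s+1)]
  exact_mod_cast key

lemma gap_lemma {a b : ℤ} (hab : a ≠ b) :
    ⟪lnHash (a:ℝ) 1, lnHash (b:ℝ) 1⟫ ≤ 1 - 1/(2*((a:ℝ)^2+1)*((|(a:ℝ)|+1)^2+1)) := by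
  set A := (a:ℝ) with hA
  set B := (b:ℝ) with hB
  set D := nrm A * nrm B with hDdef
  have hD : 0 < D := mul_pos (nrm_pos A) (nrm_pos B)
  have hD2 : D^2 = (2*A^2+2)*(2*B^2+2) := by
    rw [hDdef, mul_pow, nrm_sq, nrm_sq]
  set c := 2*A*B+2 with hc
  have hle : c ≤ D := by nlinarith [sq_nonneg (A-B)]
  have hinner : ⟪lnHash A 1, lnHash B 1⟫ = c / D := inner_lnHash A B
  have hq : (0:ℝ) < 2*(A^2+1)*(B^2+1) := by positivity
  have hbndpos : (0:ℝ) < 2*(A^2+1)*((|A|+1)^2+1) := by positivity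
  have step2 : c / D ≤ 1 - (A-B)^2/(2*(A^2+1)*(B^2+1)) := by
    have h1 : (A-B)^2/(2*(A^2+1)*(B^2+1)) ≤ (D - c)/D := by
      rw [div_le_div_iff₀ hq hD]
      have hid : D^2 - c^2 = 4*(A-B)^2 := by rw [hD2, hc]; ring
      have hq2 : 2*(A^2+1)*(B^2+1) = D^2/2 := by rw [hD2]; ring
      rw [hq2]
      nlinarith [hid, mul_nonneg (mul_nonneg (sub_nonneg.2 hle) hD.le) (sub_nonneg.2 hle)]
    have h2 : (D - c)/D = 1 - c/D := by field_simp
    linarith [h1, h2.le, h2.ge]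
  have step3 : 1/(2*(A^2+1)*((|A|+1)^2+1)) ≤ (A-B)^2/(2*(A^2+1)*(B^2+1)) := by
    rw [div_le_div_iff₀ hbndpos hq]
    have hig := int_gap hab
    nlinarith [sq_nonneg A, mul_nonneg (sq_nonneg A) (sub_nonneg.2 hig)]
  rw [hinner]
  linarith


lemma zfn_eq (x : ℝ) : zfn x = x / nrm x := by unfold zfn nrm; ring_nf

lemma zfn_pos {x : ℝ} (hx : 0 < x) : 0 < zfn x := by
  rw [zfn_eq]; exact div_pos hx (nrm_pos x)

lemma zfn_lt_zfn {x y : ℝ} (hx : 0 ≤ x) (hxy : x < y) : zfn x < zfn y := by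
  rw [zfn_eq, zfn_eq, div_lt_div_iff₀ (nrm_pos x) (nrm_pos y)]
  have hy : 0 ≤ y := le_of_lt (lt_of_le_of_lt hx hxy)
  have h1 : x * nrm y = Real.sqrt (x^2 * (2*y^2+2)) := by
    rw [Real.sqrt_mul (sq_nonneg x), Real.sqrt_sq hx]; rfl
  have h2 : y * nrm x = Real.sqrt (y^2 * (2*x^2+2)) := by
    rw [Real.sqrt_mul (sq_nonneg y), Real.sqrt_sq hy]; rfl
  rw [h1, h2]
  apply Real.sqrt_lt_sqrt (by positivity)
  nlinarith

lemma zfn_le_zfn {x y : ℝ} (hx : 0 ≤ x) (hxy : x ≤ y) : zfn x ≤ zfn y := by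
  rcases eq_or_lt_of_le hxy with rfl | h
  · exact le_refl _
  · exact (zfn_lt_zfn hx h).le

lemma zfn_le {x : ℝ} (hx : 0 ≤ x) : zfn x ≤ x / (7/5) := by
  rw [zfn_eq]
  have hn : (7/5 : ℝ) ≤ nrm x := by
    have h1 := nrm_sq x
    have h2 := (nrm_pos x).le
    nlinarith [sq_nonneg x]
  rcases eq_or_lt_of_le hx with rfl | hx'
  · simp
  · rw [div_le_div_iff₀ (nrm_pos x) (by norm_num)]
    nlinarith



lemma fTie3_eq {x : ℝ} (hx : 5 ≤ x) : fTie 3 x = 6 / (x*(x-1)*(x-2)*(x-3)) := by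
  have e0 : ∀ z : ℝ, fTie 0 z = 1/z := fun z => rfl
  have e1 : ∀ (k:ℕ) (z:ℝ), fTie (k+1) z = fTie k (z-1) - fTie k z := fun k z => rfl
  have h0 : x ≠ 0 := by linarith
  have h1 : x - 1 ≠ 0 := by intro hc; nlinarith [hc]
  have h2 : x - 2 ≠ 0 := by intro hc; nlinarith [hc]
  have h3 : x - 3 ≠ 0 := by intro hc; nlinarith [hc]
  show fTie (2+1) x = _
  simp only [e1, e0]
  have h2' : x - 1 - 1 ≠ 0 := by intro hc; nlinarith [hc]
  have h3' : x - 1 - 1 - 1 ≠ 0 := by intro hc; nlinarith [hc]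
  field_simp
  ring

lemma quarPos {x : ℝ} (hx : 5 ≤ x) : 0 < x*(x-1)*(x-2)*(x-3) := by
  have a0 : (0:ℝ) < x := by linarith
  have a1 : (0:ℝ) < x - 1 := by linarith
  have a2 : (0:ℝ) < x - 2 := by linarith
  have a3 : (0:ℝ) < x - 3 := by linarith
  exact mul_pos (mul_pos (mul_pos a0 a1) a2) a3

lemma quarMono {x y : ℝ} (hx : 5 ≤ x) (hxy : x ≤ y) : x*(x-1)*(x-2)*(x-3) ≤ y*(y-1)*(y-2)*(y-3) := by
  have c2 : (0:ℝ) ≤ y*(y-1) := by nlinarith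
  have c3 : (0:ℝ) ≤ y*(y-1)*(y-2) :=
    le_of_lt (mul_pos (mul_pos (by linarith) (by linarith)) (by linarith))
  have step1 : x*(x-1) ≤ y*(y-1) := mul_le_mul hxy (by linarith) (by linarith) (by linarith)
  have step2 : x*(x-1)*(x-2) ≤ y*(y-1)*(y-2) := mul_le_mul step1 (by linarith) (by linarith) c2
  exact mul_le_mul step2 (by linarith) (by linarith) c3

lemma quarSMono {x y : ℝ} (hx : 5 ≤ x) (hxy : x < y) : x*(x-1)*(x-2)*(x-3) < y*(y-1)*(y-2)*(y-3) := by
  calc x*(x-1)*(x-2)*(x-3) < x*(x-1)*(x-2)*(y-3) := by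
        have := mul_pos (mul_pos (by linarith : (0:ℝ) < x) (by linarith : (0:ℝ) < x-1)) (by linarith : (0:ℝ) < x-2)
        exact (mul_lt_mul_iff_right₀ this).2 (by linarith)
    _ ≤ y*(y-1)*(y-2)*(y-3) := by
        have : x*(x-1)*(x-2) ≤ y*(y-1)*(y-2) := by
          have step1 : x*(x-1) ≤ y*(y-1) := mul_le_mul hxy.le (by linarith) (by linarith) (by linarith)
          exact mul_le_mul step1 (by linarith) (by linarith) (by nlinarith)
        exact mul_le_mul this (le_refl _) (by linarith) (le_of_lt (mul_pos (mul_pos (by linarith) (by linarith)) (by linarith)))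

lemma tb_lo {j : ℤ} (hj : j ≤ 4) : tieBreak j = 1/1000 - (10:ℝ)⁻¹^10 * (j:ℝ) := if_pos hj

lemma tb_hi {j : ℤ} (hj : 5 ≤ j) : tieBreak j = 6 / ((j:ℝ)*((j:ℝ)-1)*((j:ℝ)-2)*((j:ℝ)-3)) / 100 := by
  have h5 : (5:ℝ) ≤ (j:ℝ) := by exact_mod_cast hj
  rw [tieBreak, if_neg (by omega), fTie3_eq h5]

lemma tb_pos {j : ℤ} (hj : 1 ≤ j) : 0 < tieBreak j := by
  rcases le_or_gt j 4 with h4 | h4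
  · rw [tb_lo h4]
    have : (j:ℝ) ≤ 4 := by exact_mod_cast h4
    norm_num; nlinarith
  · rw [tb_hi (by omega)]
    have h5 : (5:ℝ) ≤ (j:ℝ) := by exact_mod_cast h4
    have := quarPos h5
    positivity

lemma tb_anti {j k : ℤ} (hj : 1 ≤ j) (hjk : j < k) : tieBreak k < tieBreak j := by
  rcases le_or_gt k 4 with hk4 | hk4
  · rw [tb_lo hk4, tb_lo (by omega)]
    have : (j:ℝ) < (k:ℝ) := by exact_mod_cast hjk
    have e : (0:ℝ) < (10:ℝ)⁻¹^10 := by norm_num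
    nlinarith
  · rcases le_or_gt j 4 with hj4 | hj4
    · rw [tb_lo hj4, tb_hi (by omega)]
      have h5 : (5:ℝ) ≤ (k:ℝ) := by exact_mod_cast hk4
      have hq : (120:ℝ) ≤ (k:ℝ)*((k:ℝ)-1)*((k:ℝ)-2)*((k:ℝ)-3) := by
        have := quarMono (le_refl (5:ℝ)) h5
        norm_num at this ⊢
        linarith
      have hqpos := quarPos h5
      have h1 : 6 / ((k:ℝ)*((k:ℝ)-1)*((k:ℝ)-2)*((k:ℝ)-3)) / 100 ≤ 6/120/100 := by
        rw [div_div, div_div]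
        apply div_le_div_of_nonneg_left (by norm_num) (by norm_num) (by nlinarith)
      have hjr : (j:ℝ) ≤ 4 := by exact_mod_cast hj4
      have hjr1 : (1:ℝ) ≤ (j:ℝ) := by exact_mod_cast hj
      have : (6:ℝ)/120/100 = 1/2000 := by norm_num
      nlinarith [this, h1]
    · rw [tb_hi (by omega), tb_hi (by omega)]
      have h5 : (5:ℝ) ≤ (j:ℝ) := by exact_mod_cast hj4
      have hjk' : (j:ℝ) < (k:ℝ) := by exact_mod_cast hjk
      have := quarSMono h5 hjk'
      have hp := quarPos h5
      rw [div_div, div_div]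
      apply div_lt_div_of_pos_left (by norm_num) (by nlinarith) (by nlinarith)

lemma tb_anti_le {j k : ℤ} (hj : 1 ≤ j) (hjk : j ≤ k) : tieBreak k ≤ tieBreak j := by
  rcases eq_or_lt_of_le hjk with rfl | h
  · exact le_refl _
  · exact (tb_anti hj h).le

lemma tb_lt_milli {j : ℤ} (hj : 1 ≤ j) : tieBreak j < 1/1000 := by
  have h1 : tieBreak j ≤ tieBreak 1 := tb_anti_le le_rfl hj
  have h2 : tieBreak 1 = 1/1000 - (10:ℝ)⁻¹^10 * ((1:ℤ):ℝ) := tb_lo (by norm_num)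
  rw [h2] at h1
  norm_num at h1 ⊢
  linarith

lemma pen_lemma {a m : ℤ} (hm : 1 ≤ m) (ham : |a| ≤ m) :
    zfn (tieBreak m) < 1/(2*((a:ℝ)^2+1)*((|(a:ℝ)|+1)^2+1)) := by
  set s : ℤ := |a| with hs
  have hs0 : 0 ≤ s := abs_nonneg a
  have hSabs : |(a:ℝ)| = (s:ℝ) := by rw [hs, Int.cast_abs]
  have hA2 : (a:ℝ)^2 = (s:ℝ)^2 := by rw [← sq_abs (a:ℝ), hSabs]
  rw [hSabs, hA2]
  set S := (s:ℝ) with hSdef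
  have hS0 : (0:ℝ) ≤ S := by rw [hSdef]; exact_mod_cast hs0
  have hR : (0:ℝ) < 2*(S^2+1)*((S+1)^2+1) := by positivity
  have htbm := tb_pos hm
  rcases le_or_gt s 4 with hs4 | hs4
  · -- |a| ≤ 4
    have hS4 : S ≤ 4 := by rw [hSdef]; exact_mod_cast hs4
    have h1 : zfn (tieBreak m) ≤ tieBreak m / (7/5) := zfn_le htbm.le
    have h2 : tieBreak m < 1/1000 := tb_lt_milli hm
    have hRle : 2*(S^2+1)*((S+1)^2+1) ≤ 884 := by
      have e1 : S^2+1 ≤ 17 := by nlinarith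
      have e2 : (S+1)^2+1 ≤ 26 := by nlinarith
      nlinarith [mul_le_mul e1 e2 (by positivity) (by norm_num : (0:ℝ) ≤ 17)]
    have h3 : 1/(884:ℝ) ≤ 1/(2*(S^2+1)*((S+1)^2+1)) := by
      apply div_le_div_of_nonneg_left (by norm_num) hR hRle
    have : tieBreak m / (7/5) < (1/1000)/(7/5) := by
      apply div_lt_div_of_pos_right h2 (by norm_num)
    have h4 : (1/1000 : ℝ)/(7/5) < 1/884 := by norm_num
    linarith
  · -- |a| ≥ 5
    have hs5 : 5 ≤ s := hs4
    have hS5 : (5:ℝ) ≤ S := by rw [hSdef]; exact_mod_cast hs5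
    have htb : tieBreak m ≤ tieBreak s := tb_anti_le (by omega) ham
    have h1 : zfn (tieBreak m) ≤ zfn (tieBreak s) := zfn_le_zfn htbm.le htb
    have h2 : zfn (tieBreak s) ≤ tieBreak s / (7/5) := zfn_le (tb_pos (by omega)).le
    have hq := quarPos hS5
    have htbs : tieBreak s = 6 / (S*(S-1)*(S-2)*(S-3)) / 100 := tb_hi hs5
    have key : 6 / (S*(S-1)*(S-2)*(S-3)) / 100 / (7/5) < 1/(2*(S^2+1)*((S+1)^2+1)) := by
      rw [div_div, div_div, div_lt_div_iff₀ (by positivity) hR]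
      have u0 : (0:ℝ) ≤ S - 5 := by linarith
      have u1 : (0:ℝ) ≤ (S-5)^2 := sq_nonneg _
      have u2 : (0:ℝ) ≤ (S-5)^3 := by positivity
      have u3 : (0:ℝ) ≤ (S-5)^4 := by positivity
      nlinarith [u0, u1, u2, u3]
    have h3 : tieBreak s / (7/5) < 1/(2*(S^2+1)*((S+1)^2+1)) := by rw [htbs]; exact key
    linarith

/-- Rightmost retrieval via the layer-norm hash (Lemma "ranked-exact-match-iff"):
with scores s_j = φ(h_i,1)·φ(h_j,1) − z(f(j)), the saturated-attention output φ̄ over the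
maximizing positions equals φ(h_i,1) iff some j < i has h_j = h_i. -/
theorem ranked_exact_match_iff (i : ℤ) (hi : 2 ≤ i) (h : ℤ → ℤ)
    (hbound : ∀ j, 1 ≤ j → j ≤ i → |h j| ≤ j)
    (hside : (∀ j, 1 ≤ j → j < i → h j ≠ h i) →
      ((∀ j, 1 ≤ j → j < i → h j < h i) ∨ (∀ j, 1 ≤ j → j < i → h i < h j))) :
    let s : ℤ → ℝ :=
      fun j => ⟪lnHash ((h i : ℤ) : ℝ) 1, lnHash ((h j : ℤ) : ℝ) 1⟫ - zfn (tieBreak j)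
    let J : Finset ℤ := Finset.Ico 1 i
    let M : Finset ℤ := J.filter fun j => ∀ j' ∈ J, s j' ≤ s j
    ((∃ j, 1 ≤ j ∧ j < i ∧ h j = h i) ↔
      (M.card : ℝ)⁻¹ • ∑ j ∈ M, lnHash ((h j : ℤ) : ℝ) 1 = lnHash ((h i : ℤ) : ℝ) 1) := by
  intro s J M
  have hsdef : ∀ j : ℤ, s j
      = ⟪lnHash ((h i : ℤ) : ℝ) 1, lnHash ((h j : ℤ) : ℝ) 1⟫ - zfn (tieBreak j) := fun _ => rfl
  have hJne : J.Nonempty := ⟨1, Finset.mem_Ico.2 ⟨le_refl 1, by omega⟩⟩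
  obtain ⟨j₁, hj₁J, hj₁max⟩ := J.exists_max_image s hJne
  have hj₁M : j₁ ∈ M := Finset.mem_filter.2 ⟨hj₁J, hj₁max⟩
  constructor
  · rintro ⟨j, hj1, hji, hjeq⟩
    have hTne : (J.filter (fun k => h k = h i)).Nonempty :=
      ⟨j, Finset.mem_filter.2 ⟨Finset.mem_Ico.2 ⟨hj1, hji⟩, hjeq⟩⟩
    set j₀ := (J.filter (fun k => h k = h i)).max' hTne with hj₀
    have hj₀T : j₀ ∈ J.filter (fun k => h k = h i) := Finset.max'_mem _ hTne
    have hj₀J : j₀ ∈ J := (Finset.mem_filter.1 hj₀T).1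
    have hj₀eq : h j₀ = h i := (Finset.mem_filter.1 hj₀T).2
    have hj₀1 : 1 ≤ j₀ := (Finset.mem_Ico.1 hj₀J).1
    have hj₀i : j₀ < i := (Finset.mem_Ico.1 hj₀J).2
    have habs : |h i| ≤ j₀ := hj₀eq ▸ hbound j₀ hj₀1 (le_of_lt hj₀i)
    have hsj₀ : s j₀ = 1 - zfn (tieBreak j₀) := by
      rw [hsdef, hj₀eq, inner_lnHash_self]
    have key : ∀ k ∈ J, k ≠ j₀ → s k < s j₀ := by
      intro k hkJ hkne
      have hk1 : 1 ≤ k := (Finset.mem_Ico.1 hkJ).1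
      by_cases hmatch : h k = h i
      · have hkT : k ∈ J.filter (fun k => h k = h i) := Finset.mem_filter.2 ⟨hkJ, hmatch⟩
        have hklt : k < j₀ := lt_of_le_of_ne (Finset.le_max' _ k hkT) hkne
        have htb := tb_anti hk1 hklt
        have hz := zfn_lt_zfn (tb_pos hj₀1).le htb
        rw [hsdef k, hmatch, inner_lnHash_self, hsj₀]
        linarith
      · have hne : h i ≠ h k := fun e => hmatch e.symm
        have hgap := gap_lemma hne
        have hpen := pen_lemma hj₀1 habs
        have hzk : 0 < zfn (tieBreak k) := zfn_pos (tb_pos hk1)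
        rw [hsdef k, hsj₀]
        linarith
    have hMeq : M = {j₀} := by
      ext k
      rw [Finset.mem_singleton]
      constructor
      · intro hkM
        obtain ⟨hkJ, hkmax⟩ := Finset.mem_filter.1 hkM
        by_contra hkne
        exact absurd (hkmax j₀ hj₀J) (not_le.2 (key k hkJ hkne))
      · rintro rfl
        refine Finset.mem_filter.2 ⟨hj₀J, fun j' hj' => ?_⟩
        by_cases hj'e : j' = j₀
        · rw [hj'e]
        · exact (key j' hj' hj'e).le
    rw [hMeq]
    simp [hj₀eq]
  · intro havg
    by_contra hno
    push_neg at hno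
    have h1 : ⟪lnHash ((h i : ℤ) : ℝ) 1,
        (M.card : ℝ)⁻¹ • ∑ j ∈ M, lnHash ((h j : ℤ) : ℝ) 1⟫ = 1 := by
      rw [havg, inner_lnHash_self]
    rw [real_inner_smul_right, inner_sum] at h1
    have hMne : M.Nonempty := ⟨j₁, hj₁M⟩
    have hlt : ∀ k ∈ M, ⟪lnHash ((h i : ℤ) : ℝ) 1, lnHash ((h k : ℤ) : ℝ) 1⟫ < 1 := by
      intro k hk
      have hkJ : k ∈ J := (Finset.mem_filter.1 hk).1
      have hk1 : 1 ≤ k := (Finset.mem_Ico.1 hkJ).1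
      have hki : k < i := (Finset.mem_Ico.1 hkJ).2
      have hne : h k ≠ h i := hno k hk1 hki
      have hne' : ((h i : ℤ) : ℝ) ≠ ((h k : ℤ) : ℝ) := by exact_mod_cast hne.symm
      exact inner_lnHash_lt_one hne'
    have hsum : ∑ k ∈ M, ⟪lnHash ((h i : ℤ) : ℝ) 1, lnHash ((h k : ℤ) : ℝ) 1⟫
        < ∑ _k ∈ M, (1:ℝ) := Finset.sum_lt_sum_of_nonempty hMne hlt
    rw [Finset.sum_const, nsmul_eq_mul, mul_one] at hsum
    have hcard : (0:ℝ) < (M.card : ℝ) := by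
      exact_mod_cast Finset.card_pos.2 hMne
    rw [inv_mul_eq_one₀ hcard.ne'] at h1
    linarith [h1.symm.le, h1.le]
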